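/- Let Δ, Δ' ∈ F⊗F be symmetric weak Frobenius elements. In F^{⊗3} (tensor over 𝕜), writing Δ_{pq} for the image of Δ under the 𝕜-linear embedding F⊗F → F^{⊗3} that places the two tensor legs in positions p and q and 1 in the remaining position, the following six products are all equal: Δ_{12}·Δ'_{13} = Δ'_{23}·Δ_{12} = Δ_{13}·Δ'_{23} = Δ'_{12}·Δ_{13} = Δ_{23}·Δ'_{12} = Δ'_{13}·Δ_{23}. -/
import Mathlib


/-!
For symmetric weak Frobenius elements `Δ, Δ'` of `F ⊗ F`, the six products
`Δ_{12}·Δ'_{13} = Δ'_{23}·Δ_{12} = Δ_{13}·Δ'_{23} = Δ'_{12}·Δ_{13} = Δ_{23}·Δ'_{12}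
 = Δ'_{13}·Δ_{23}` in `F^{⊗3}` are all equal.
-/

open scoped TensorProduct

variable (k F : Type*)

/-- Weak Frobenius elements of `F ⊗ F`: `(a⊗b)·Δ = Δ·(b⊗a)` for all `a, b ∈ F`. -/
def IsWeakFrobenius [CommSemiring k] [Ring F] [Algebra k F] (Δ : F ⊗[k] F) : Prop :=
  ∀ a b : F, (a ⊗ₜ[k] b) * Δ = Δ * (b ⊗ₜ[k] a)

/-- Symmetric elements of `F ⊗ F`: fixed by the flip. -/
def IsSymmEl [CommSemiring k] [Ring F] [Algebra k F] (Δ : F ⊗[k] F) : Prop :=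
  (Algebra.TensorProduct.comm k F F) Δ = Δ

/-- The embedding `F⊗F → F⊗F⊗F` placing the two legs in positions 1, 2. -/
noncomputable def emb12 [CommSemiring k] [Ring F] [Algebra k F] :
    F ⊗[k] F →ₗ[k] F ⊗[k] (F ⊗[k] F) :=
  LinearMap.lTensor F ((TensorProduct.mk k F F).flip 1)

/-- The embedding `F⊗F → F⊗F⊗F` placing the two legs in positions 1, 3. -/
noncomputable def emb13 [CommSemiring k] [Ring F] [Algebra k F] :
    F ⊗[k] F →ₗ[k] F ⊗[k] (F ⊗[k] F) :=
  LinearMap.lTensor F (TensorProduct.mk k F F 1)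

/-- The embedding `F⊗F → F⊗F⊗F` placing the two legs in positions 2, 3. -/
noncomputable def emb23 [CommSemiring k] [Ring F] [Algebra k F] :
    F ⊗[k] F →ₗ[k] F ⊗[k] (F ⊗[k] F) :=
  TensorProduct.mk k F (F ⊗[k] F) 1

section helpers
variable [CommSemiring k] [Ring F] [Algebra k F]

lemma emb12_tmul (x y : F) : emb12 k F (x ⊗ₜ[k] y) = x ⊗ₜ[k] (y ⊗ₜ[k] (1:F)) := rfl
lemma emb13_tmul (x y : F) : emb13 k F (x ⊗ₜ[k] y) = x ⊗ₜ[k] ((1:F) ⊗ₜ[k] y) := rfl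
lemma emb23_tmul (x y : F) : emb23 k F (x ⊗ₜ[k] y) = (1:F) ⊗ₜ[k] (x ⊗ₜ[k] y) := rfl

-- multiplicativity-like facts
lemma emb12_mul (w₁ w₂ : F ⊗[k] F) :
    emb12 k F (w₁ * w₂) = emb12 k F w₁ * emb12 k F w₂ := by
  induction w₁ using TensorProduct.induction_on with
  | zero => simp
  | add a b ha hb => simp [add_mul, ha, hb]
  | tmul a b =>
    induction w₂ using TensorProduct.induction_on with
    | zero => simp
    | add c d hc hd => simp [mul_add, hc, hd]
    | tmul c d => simp [emb12_tmul, Algebra.TensorProduct.tmul_mul_tmul]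

lemma emb13_mul (w₁ w₂ : F ⊗[k] F) :
    emb13 k F (w₁ * w₂) = emb13 k F w₁ * emb13 k F w₂ := by
  induction w₁ using TensorProduct.induction_on with
  | zero => simp
  | add a b ha hb => simp [add_mul, ha, hb]
  | tmul a b =>
    induction w₂ using TensorProduct.induction_on with
    | zero => simp
    | add c d hc hd => simp [mul_add, hc, hd]
    | tmul c d => simp [emb13_tmul, Algebra.TensorProduct.tmul_mul_tmul]

lemma emb23_mul (w₁ w₂ : F ⊗[k] F) :
    emb23 k F (w₁ * w₂) = emb23 k F w₁ * emb23 k F w₂ := by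
  simp [emb23, Algebra.TensorProduct.tmul_mul_tmul]

-- commuting facts
lemma emb12_comm3 (v : F) (w : F ⊗[k] F) :
    emb12 k F w * ((1:F) ⊗ₜ[k] ((1:F) ⊗ₜ[k] v)) =
      ((1:F) ⊗ₜ[k] ((1:F) ⊗ₜ[k] v)) * emb12 k F w := by
  induction w using TensorProduct.induction_on with
  | zero => simp
  | add a b ha hb => simp [add_mul, mul_add, ha, hb]
  | tmul a b => simp [emb12_tmul, Algebra.TensorProduct.tmul_mul_tmul]

lemma emb13_comm2 (v : F) (w : F ⊗[k] F) :
    emb13 k F w * ((1:F) ⊗ₜ[k] (v ⊗ₜ[k] (1:F))) =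
      ((1:F) ⊗ₜ[k] (v ⊗ₜ[k] (1:F))) * emb13 k F w := by
  induction w using TensorProduct.induction_on with
  | zero => simp
  | add a b ha hb => simp [add_mul, mul_add, ha, hb]
  | tmul a b => simp [emb13_tmul, Algebra.TensorProduct.tmul_mul_tmul]

lemma emb23_comm1 (v : F) (w : F ⊗[k] F) :
    emb23 k F w * (v ⊗ₜ[k] ((1:F) ⊗ₜ[k] (1:F))) =
      (v ⊗ₜ[k] ((1:F) ⊗ₜ[k] (1:F))) * emb23 k F w := by
  induction w using TensorProduct.induction_on with
  | zero => simp
  | add a b ha hb => simp [add_mul, mul_add, ha, hb]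
  | tmul a b => simp [emb23_tmul, Algebra.TensorProduct.tmul_mul_tmul]

-- key single-leg move lemmas from weak Frobenius
lemma key12 (Δ : F ⊗[k] F) (hΔwf : IsWeakFrobenius k F Δ) (u : F) :
    ((1:F) ⊗ₜ[k] (u ⊗ₜ[k] (1:F))) * emb12 k F Δ
      = emb12 k F Δ * (u ⊗ₜ[k] ((1:F) ⊗ₜ[k] (1:F))) := by
  have h := hΔwf 1 u
  have := congrArg (emb12 k F) h
  rwa [emb12_mul, emb12_mul, emb12_tmul, emb12_tmul] at this

lemma key13 (Δ : F ⊗[k] F) (hΔwf : IsWeakFrobenius k F Δ) (u : F) :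
    (u ⊗ₜ[k] ((1:F) ⊗ₜ[k] (1:F))) * emb13 k F Δ
      = emb13 k F Δ * ((1:F) ⊗ₜ[k] ((1:F) ⊗ₜ[k] u)) := by
  have h := hΔwf u 1
  have := congrArg (emb13 k F) h
  rwa [emb13_mul, emb13_mul, emb13_tmul, emb13_tmul] at this

lemma key23 (Δ : F ⊗[k] F) (hΔwf : IsWeakFrobenius k F Δ) (u : F) :
    ((1:F) ⊗ₜ[k] ((1:F) ⊗ₜ[k] u)) * emb23 k F Δ
      = emb23 k F Δ * ((1:F) ⊗ₜ[k] (u ⊗ₜ[k] (1:F))) := by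
  have h := hΔwf 1 u
  have := congrArg (emb23 k F) h
  rwa [emb23_mul, emb23_mul, emb23_tmul, emb23_tmul] at this

-- L12 : P1 = P2, needs wf of Δ, linear in Δ'
lemma L12 (Δ Δ' : F ⊗[k] F) (hΔwf : IsWeakFrobenius k F Δ) :
    emb12 k F Δ * emb13 k F Δ' = emb23 k F Δ' * emb12 k F Δ := by
  induction Δ' using TensorProduct.induction_on with
  | zero => simp
  | add a b ha hb => simp [mul_add, add_mul, ha, hb]
  | tmul u v =>
    rw [emb13_tmul, emb23_tmul]
    have h1 : u ⊗ₜ[k] ((1:F) ⊗ₜ[k] v)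
        = (u ⊗ₜ[k] ((1:F) ⊗ₜ[k] (1:F))) * ((1:F) ⊗ₜ[k] ((1:F) ⊗ₜ[k] v)) := by
      simp [Algebra.TensorProduct.tmul_mul_tmul]
    have h2 : (1:F) ⊗ₜ[k] (u ⊗ₜ[k] v)
        = ((1:F) ⊗ₜ[k] (u ⊗ₜ[k] (1:F))) * ((1:F) ⊗ₜ[k] ((1:F) ⊗ₜ[k] v)) := by
      simp [Algebra.TensorProduct.tmul_mul_tmul]
    rw [h1, h2, ← mul_assoc, ← key12 k F Δ hΔwf u, mul_assoc, mul_assoc,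
      ← emb12_comm3]

-- L23 : P2 = P3, needs wf of Δ', linear in Δ
lemma L23 (Δ Δ' : F ⊗[k] F) (hΔ'wf : IsWeakFrobenius k F Δ') :
    emb23 k F Δ' * emb12 k F Δ = emb13 k F Δ * emb23 k F Δ' := by
  induction Δ using TensorProduct.induction_on with
  | zero => simp
  | add a b ha hb => simp [mul_add, add_mul, ha, hb]
  | tmul x y =>
    rw [emb12_tmul, emb13_tmul]
    have h1 : x ⊗ₜ[k] (y ⊗ₜ[k] (1:F))
        = (x ⊗ₜ[k] ((1:F) ⊗ₜ[k] (1:F))) * ((1:F) ⊗ₜ[k] (y ⊗ₜ[k] (1:F))) := by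
      simp [Algebra.TensorProduct.tmul_mul_tmul]
    have h2 : x ⊗ₜ[k] ((1:F) ⊗ₜ[k] y)
        = (x ⊗ₜ[k] ((1:F) ⊗ₜ[k] (1:F))) * ((1:F) ⊗ₜ[k] ((1:F) ⊗ₜ[k] y)) := by
      simp [Algebra.TensorProduct.tmul_mul_tmul]
    rw [h1, h2, ← mul_assoc, emb23_comm1, mul_assoc, mul_assoc,
      key23 k F Δ' hΔ'wf y]

-- L34' : for every w, emb12 (comm w) * emb13 Δ = emb13 Δ * emb23 w, needs wf Δ
lemma L34' (Δ : F ⊗[k] F) (hΔwf : IsWeakFrobenius k F Δ) (w : F ⊗[k] F) :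
    emb12 k F ((Algebra.TensorProduct.comm k F F) w) * emb13 k F Δ
      = emb13 k F Δ * emb23 k F w := by
  induction w using TensorProduct.induction_on with
  | zero => simp
  | add a b ha hb => simp only [map_add, add_mul, mul_add, ha, hb]
  | tmul u v =>
    rw [Algebra.TensorProduct.comm_tmul, emb12_tmul, emb23_tmul]
    have h1 : v ⊗ₜ[k] (u ⊗ₜ[k] (1:F))
        = ((1:F) ⊗ₜ[k] (u ⊗ₜ[k] (1:F))) * (v ⊗ₜ[k] ((1:F) ⊗ₜ[k] (1:F))) := by
      simp [Algebra.TensorProduct.tmul_mul_tmul]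
    have h2 : (1:F) ⊗ₜ[k] (u ⊗ₜ[k] v)
        = ((1:F) ⊗ₜ[k] (u ⊗ₜ[k] (1:F))) * ((1:F) ⊗ₜ[k] ((1:F) ⊗ₜ[k] v)) := by
      simp [Algebra.TensorProduct.tmul_mul_tmul]
    rw [h1, h2, mul_assoc, key13 k F Δ hΔwf v, ← mul_assoc, ← mul_assoc,
      ← emb13_comm2]

end helpers

theorem stmt11 [Field k] [Ring F] [Algebra k F] [FiniteDimensional k F]
    (Δ Δ' : F ⊗[k] F)
    (hΔwf : IsWeakFrobenius k F Δ) (hΔsym : IsSymmEl k F Δ)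
    (hΔ'wf : IsWeakFrobenius k F Δ') (hΔ'sym : IsSymmEl k F Δ') :
    emb12 k F Δ * emb13 k F Δ' = emb23 k F Δ' * emb12 k F Δ ∧
    emb12 k F Δ * emb13 k F Δ' = emb13 k F Δ * emb23 k F Δ' ∧
    emb12 k F Δ * emb13 k F Δ' = emb12 k F Δ' * emb13 k F Δ ∧
    emb12 k F Δ * emb13 k F Δ' = emb23 k F Δ * emb12 k F Δ' ∧
    emb12 k F Δ * emb13 k F Δ' = emb13 k F Δ' * emb23 k F Δ := by
  have e1 := L12 k F Δ Δ' hΔwf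
  have e2 := L23 k F Δ Δ' hΔ'wf
  have e3 : emb13 k F Δ * emb23 k F Δ' = emb12 k F Δ' * emb13 k F Δ := by
    have := L34' k F Δ hΔwf Δ'
    rw [hΔ'sym] at this
    exact this.symm
  have e4 := L12 k F Δ' Δ hΔ'wf
  have e5 := L23 k F Δ' Δ hΔwf
  refine ⟨e1, e1.trans e2, (e1.trans e2).trans e3, ?_, ?_⟩
  · exact ((e1.trans e2).trans e3).trans e4
  · exact (((e1.trans e2).trans e3).trans e4).trans e5
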